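/- Let α < 0 < β, ε > 0, and let p < q with ℓ := q − p, and let ℓ_α, ℓ_β ∈ [0, ε/2] be the phase lengths of [p,q]. Assume (β−α)(ℓ + ℓ_β − ℓ_α) > 4, and assume that there exists δ > 0 such that g(x/ε) = α for almost every x ∈ (p, p + δ), or that there exists δ > 0 such that g(x/ε) = α for almost every x ∈ (q − δ, q). Then there exist no v ∈ ℝ and no Lipschitz function n : [p,q] → [−1,1] with n(p) = 1, n(q) = −1 and n'(x) = v − g(x/ε) for almost every x ∈ [p,q]; that is, the edge is not calibrable. -/

import Mathlib

open MeasureTheory Set Filter Topology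

/-- The 1-periodic forcing term: `α` within distance `1/4` of the integers, `β` otherwise. -/
noncomputable def g (α β x : ℝ) : ℝ := if |x - (round x : ℝ)| ≤ 1/4 then α else β

/-- The edge `[p,q]` with endpoint values `a`, `b` is calibrated with velocity `v` by the
Lipschitz field `n : [p,q] → [-1,1]` satisfying `n' = v - g(·/ε)` a.e. on `[p,q]`. -/
def Calibrates (α β ε p q a b v : ℝ) (n : ℝ → ℝ) : Prop :=
  (∃ K : NNReal, LipschitzOnWith K n (Icc p q)) ∧
  (∀ x ∈ Icc p q, n x ∈ Icc (-1 : ℝ) 1) ∧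
  n p = a ∧ n q = b ∧
  ∀ᵐ x ∂(volume.restrict (Icc p q)), HasDerivAt n (v - g α β (x / ε)) x

lemma lip_ftc (N f : ℝ → ℝ) (K : NNReal) (a b : ℝ) (hab : a < b)
    (hN : LipschitzWith K N)
    (hf : ∀ᵐ x ∂(volume.restrict (Ioo a b)), HasDerivAt N (f x) x) :
    ∫ x in Ioo a b, f x = N b - N a := by
  have hNc : Continuous N := hN.continuous
  set h : ℕ → ℝ := fun k => 1 / (k + 1) with hh
  have hpos : ∀ k, 0 < h k := fun k => by positivity
  have hto : Tendsto h atTop (𝓝 0) := tendsto_one_div_add_atTop_nhds_zero_nat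
  set d : ℕ → ℝ → ℝ := fun k x => (N (x + h k) - N x) / h k with hd
  set F : ℝ → ℝ := fun y => ∫ t in a..y, N t with hF
  have hNi : ∀ u v : ℝ, IntervalIntegrable N volume u v := fun u v =>
    hNc.intervalIntegrable u v
  have A : ∀ k, ∫ x in Ioo a b, d k x =
      (F (b + h k) - F b) / h k - (F (a + h k) - F a) / h k := by
    intro k
    have i1 : IntervalIntegrable (fun x => N (x + h k)) volume a b :=
      (by continuity : Continuous fun x => N (x + h k)).intervalIntegrable a b
    rw [← integral_Ioc_eq_integral_Ioo, ← intervalIntegral.integral_of_le hab.le]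
    calc ∫ x in a..b, d k x = (h k)⁻¹ * ∫ x in a..b, (N (x + h k) - N x) := by
          simp only [hd, div_eq_inv_mul]
          rw [intervalIntegral.integral_const_mul]
      _ = (h k)⁻¹ * ((∫ x in a..b, N (x + h k)) - ∫ x in a..b, N x) := by
          rw [intervalIntegral.integral_sub i1 (hNi a b)]
      _ = (h k)⁻¹ * ((F (b + h k) - F (a + h k)) - (F b - F a)) := by
          rw [intervalIntegral.integral_comp_add_right N (h k)]
          congr 1
          rw [show F b - F a = ∫ x in a..b, N x by
            simp [hF, intervalIntegral.integral_same]]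
          simp only [hF]
          rw [← intervalIntegral.integral_interval_sub_left (hNi a (b + h k)) (hNi a (a + h k))]
      _ = (F (b + h k) - F b) / h k - (F (a + h k) - F a) / h k := by
          field_simp
          ring
  have B : ∀ c : ℝ, Tendsto (fun k => (F (c + h k) - F c) / h k) atTop (𝓝 (N c)) := by
    intro c
    have hder : HasDerivAt F (N c) c :=
      intervalIntegral.integral_hasDerivAt_right (hNi a c)
        hNc.stronglyMeasurable.stronglyMeasurableAtFilter hNc.continuousAt
    have hs := hasDerivAt_iff_tendsto_slope.1 hder
    have hseq : Tendsto (fun k => c + h k) atTop (𝓝[≠] c) := by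
      apply tendsto_nhdsWithin_of_tendsto_nhds_of_eventually_within
      · simpa using (tendsto_const_nhds.add hto)
      · filter_upwards with k
        simp [mem_compl_iff, (hpos k).ne']
    have := hs.comp hseq
    convert this using 2 with k
    simp only [Function.comp_apply, slope_def_field]
    field_simp
    rw [add_sub_cancel_left]
  have C : ∀ᵐ x ∂(volume.restrict (Ioo a b)),
      Tendsto (fun k => d k x) atTop (𝓝 (f x)) := by
    filter_upwards [hf] with x hx
    have hs := hasDerivAt_iff_tendsto_slope.1 hx
    have hseq : Tendsto (fun k => x + h k) atTop (𝓝[≠] x) := by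
      apply tendsto_nhdsWithin_of_tendsto_nhds_of_eventually_within
      · simpa using (tendsto_const_nhds.add hto)
      · filter_upwards with k
        simp [mem_compl_iff, (hpos k).ne']
    have := hs.comp hseq
    convert this using 2 with k
    simp only [Function.comp_apply, slope_def_field]
    simp only [hd]
    field_simp
    rw [add_sub_cancel_left]
  have D : Tendsto (fun k => ∫ x in Ioo a b, d k x) atTop (𝓝 (∫ x in Ioo a b, f x)) := by
    apply tendsto_integral_of_dominated_convergence (fun _ => (K : ℝ))
    · intro k
      exact ((by continuity : Continuous fun x => d k x)).aestronglyMeasurable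
    · exact integrable_const _
    · intro k
      filter_upwards with x
      simp only [hd, Real.norm_eq_abs, abs_div, abs_of_pos (hpos k)]
      rw [div_le_iff₀ (hpos k)]
      calc |N (x + h k) - N x| ≤ K * |x + h k - x| := by
            have := hN.dist_le_mul (x + h k) x
            simpa [Real.dist_eq] using this
        _ = K * h k := by rw [add_sub_cancel_left, abs_of_pos (hpos k)]
    · exact C
  have E : Tendsto (fun k => ∫ x in Ioo a b, d k x) atTop (𝓝 (N b - N a)) := by
    have := (B b).sub (B a)
    refine this.congr fun k => ?_
    exact (A k).symm
  exact tendsto_nhds_unique D E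

lemma measurable_g (α β : ℝ) : Measurable (g α β) := by
  unfold g
  have hround : Measurable fun x : ℝ => ((round x : ℤ) : ℝ) := by
    have h1 : Measurable fun x : ℝ => (⌊x + 1/2⌋ : ℤ) :=
      (measurable_id.add_const _).floor
    have h2 : (fun x : ℝ => ((round x : ℤ) : ℝ)) = fun x => ((⌊x + 1/2⌋ : ℤ) : ℝ) := by
      funext x; rw [round_eq]
    rw [h2]
    exact measurable_from_top.comp h1
  apply Measurable.ite _ measurable_const measurable_const
  exact measurableSet_le ((measurable_id.sub hround).abs) measurable_const

theorem stmt9 (α β ε p q lα lβ : ℝ) (hα : α < 0) (hβ : 0 < β) (hε0 : 0 < ε)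
    (hpq : p < q)
    (hlα0 : 0 ≤ lα) (hlα1 : lα ≤ ε / 2) (hlβ0 : 0 ≤ lβ) (hlβ1 : lβ ≤ ε / 2)
    (hsum : lα + lβ = (q - p) - ε * (⌊(q - p) / ε⌋ : ℝ))
    (hint : ∫ s in p..q, g α β (s / ε)
      = (α + β) / 2 * ((q - p) - lα - lβ) + α * lα + β * lβ)
    (hcond : 4 < (β - α) * ((q - p) + lβ - lα))
    (hphase : (∃ δ > 0, ∀ᵐ x ∂(volume.restrict (Ioo p (p + δ))), g α β (x / ε) = α) ∨
              (∃ δ > 0, ∀ᵐ x ∂(volume.restrict (Ioo (q - δ) q)), g α β (x / ε) = α)) :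
    ¬ ∃ v : ℝ, ∃ n : ℝ → ℝ, Calibrates α β ε p q 1 (-1) v n := by
  rintro ⟨v, n, ⟨K, hK⟩, hrange, hnp, hnq, hder⟩
  set f : ℝ → ℝ := fun x => v - g α β (x / ε) with hf
  -- the clamped extension
  set c : ℝ → ℝ := fun x => max (min x q) p with hc
  set N : ℝ → ℝ := fun x => n (c x) with hN
  have hceq : ∀ x ∈ Icc p q, c x = x := by
    intro x hx
    simp only [hc]
    rw [min_eq_left hx.2, max_eq_left hx.1]
  have hNeq : ∀ x ∈ Icc p q, N x = n x := fun x hx => by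
    simp only [hN]; rw [hceq x hx]
  have hclip : LipschitzWith 1 c := (LipschitzWith.id.min_const q).max_const p
  have hNK : LipschitzWith K N := by
    have hmaps : MapsTo c univ (Icc p q) := by
      intro x _
      constructor
      · exact le_max_right _ _
      · simp only [hc]
        exact max_le (min_le_right _ _) hpq.le
    have := hK.comp (lipschitzOnWith_univ.2 hclip) hmaps
    rw [mul_one] at this
    exact (lipschitzOnWith_univ.1 this)
  -- a.e. derivative of N on open subintervals of (p,q)
  have hderN : ∀ᵐ x ∂(volume.restrict (Ioo p q)), HasDerivAt N (f x) x := by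
    have h1 := ae_restrict_of_ae_restrict_of_subset Ioo_subset_Icc_self hder
    filter_upwards [h1, ae_restrict_mem measurableSet_Ioo] with x hx hmem
    refine hx.congr_of_eventuallyEq ?_
    filter_upwards [isOpen_Ioo.mem_nhds hmem] with y hy
    exact hNeq y (Ioo_subset_Icc_self hy)
  -- integrability of g(·/ε)
  have hgm : Measurable fun x : ℝ => g α β (x / ε) :=
    (measurable_g α β).comp (measurable_id.div_const ε)
  have hgb : ∀ x : ℝ, ‖g α β (x / ε)‖ ≤ |α| + |β| := by
    intro x
    simp only [Real.norm_eq_abs, g]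
    split_ifs
    · exact le_add_of_nonneg_right (abs_nonneg _)
    · exact le_add_of_nonneg_left (abs_nonneg _)
  have hgi : ∀ s t : ℝ, IntegrableOn (fun x => g α β (x / ε)) (Ioo s t) := by
    intro s t
    refine (integrable_const (|α| + |β|)).mono' hgm.aestronglyMeasurable ?_
    filter_upwards with x using hgb x
  -- FTC on the whole interval
  have key : v * (q - p) - ∫ s in p..q, g α β (s / ε) = -2 := by
    have h0 := lip_ftc N f K p q hpq hNK hderN
    rw [hNeq p (left_mem_Icc.2 hpq.le), hNeq q (right_mem_Icc.2 hpq.le), hnp, hnq] at h0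
    have h1 : ∫ x in Ioo p q, f x
        = v * (q - p) - ∫ x in Ioo p q, g α β (x / ε) := by
      rw [hf, integral_sub (integrableOn_const (C := v) measure_Ioo_lt_top.ne) (hgi p q)]
      rw [setIntegral_const]
      congr 1
      rw [Real.volume_real_Ioo_of_le (by linarith), smul_eq_mul, mul_comm]
    rw [h1] at h0
    rw [intervalIntegral.integral_of_le hpq.le, integral_Ioc_eq_integral_Ioo]
    linarith
  -- v ≤ α from the phase condition
  have hvα : v ≤ α := by
    rcases hphase with ⟨δ, hδ, hae⟩ | ⟨δ, hδ, hae⟩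
    · set r : ℝ := min (p + δ) q with hr
      have hpr : p < r := lt_min (by linarith) hpq
      have hrq : r ≤ q := min_le_right _ _
      have hsub1 : Ioo p r ⊆ Ioo p (p + δ) := Ioo_subset_Ioo le_rfl (min_le_left _ _)
      have hsub2 : Ioo p r ⊆ Ioo p q := Ioo_subset_Ioo le_rfl hrq
      have hft := lip_ftc N f K p r hpr hNK
        (ae_restrict_of_ae_restrict_of_subset hsub2 hderN)
      have hcongr : ∫ x in Ioo p r, f x = ∫ x in Ioo p r, (v - α : ℝ) := by
        refine integral_congr_ae ?_
        filter_upwards [ae_restrict_of_ae_restrict_of_subset hsub1 hae] with x hx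
        simp only [hf, hx]
      rw [hcongr, setIntegral_const, Real.volume_real_Ioo_of_le (by linarith),
        smul_eq_mul] at hft
      have hnr : N r ≤ 1 := by
        rw [hNeq r ⟨hpr.le, hrq⟩]
        exact (hrange r ⟨hpr.le, hrq⟩).2
      rw [hNeq p (left_mem_Icc.2 hpq.le), hnp] at hft
      nlinarith [hft, hnr, hpr]
    · set r : ℝ := max (q - δ) p with hr
      have hrq : r < q := max_lt (by linarith) hpq
      have hpr : p ≤ r := le_max_right _ _
      have hsub1 : Ioo r q ⊆ Ioo (q - δ) q := Ioo_subset_Ioo (le_max_left _ _) le_rfl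
      have hsub2 : Ioo r q ⊆ Ioo p q := Ioo_subset_Ioo hpr le_rfl
      have hft := lip_ftc N f K r q hrq hNK
        (ae_restrict_of_ae_restrict_of_subset hsub2 hderN)
      have hcongr : ∫ x in Ioo r q, f x = ∫ x in Ioo r q, (v - α : ℝ) := by
        refine integral_congr_ae ?_
        filter_upwards [ae_restrict_of_ae_restrict_of_subset hsub1 hae] with x hx
        simp only [hf, hx]
      rw [hcongr, setIntegral_const, Real.volume_real_Ioo_of_le (by linarith),
        smul_eq_mul] at hft
      have hnr : -1 ≤ N r := by
        rw [hNeq r ⟨hpr, hrq.le⟩]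
        exact (hrange r ⟨hpr, hrq.le⟩).1
      rw [hNeq q (right_mem_Icc.2 hpq.le), hnq] at hft
      nlinarith [hft, hnr, hrq]
  -- final contradiction
  nlinarith [mul_le_mul_of_nonneg_right hvα (by linarith : (0:ℝ) ≤ q - p), key, hint, hcond]
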